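/- Let W := (I - (I - P)·X^{-1})^{-1}. Then the kernel of the linear map ℂ^m → ℂ^m, v ↦ (I - P)(I - X^{-1})·v, equals the range of the linear map ℂ^m → ℂ^m, v ↦ W·P·v. -/

import Mathlib

open Matrix

private lemma wperm_mul {m : ℕ} [NeZero m] (A B : Matrix (Fin m) (Fin m) ℂ)
    (u w : Fin m → ℂ) (s r : Fin m)
    (hA : ∀ i j, A i j = if j = i + s then u i else 0)
    (hB : ∀ i j, B i j = if j = i + r then w i else 0) (i j : Fin m) :
    (A * B) i j = if j = i + s + r then u i * w (i + s) else 0 := by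
  rw [Matrix.mul_apply, Finset.sum_eq_single (i + s)]
  · rw [hA, if_pos rfl, hB, mul_ite, mul_zero]
  · intro k _ hk
    rw [hA, if_neg hk, zero_mul]
  · intro h
    exact absurd (Finset.mem_univ _) h

private lemma wperm_pow {m : ℕ} [NeZero m] (C : Matrix (Fin m) (Fin m) ℂ)
    (c : Fin m → ℂ) (hc : ∀ i, c i ≠ 0) (o : Fin m)
    (hC : ∀ i j, C i j = if j = i + o then c i else 0) (k : ℕ) :
    ∃ u : Fin m → ℂ, (∀ i, u i ≠ 0) ∧ ∀ i j, (C ^ k) i j = if j = i + k • o then u i else 0 := by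
  induction k with
  | zero =>
    exact ⟨fun _ => 1, fun _ => one_ne_zero, by simp [Matrix.one_apply, eq_comm]⟩
  | succ k ih =>
    obtain ⟨u, hu, hXk⟩ := ih
    refine ⟨fun i => u i * c (i + k • o), fun i => mul_ne_zero (hu i) (hc _), ?_⟩
    intro i j
    rw [pow_succ, wperm_mul _ _ u c _ _ hXk hC i j, succ_nsmul, ← add_assoc]


/-- With `W := (I - (I - P) X⁻¹)⁻¹`, the kernel of `v ↦ (I - P)(I - X⁻¹) v` equals
the range of `v ↦ W P v`. -/
theorem stmt_11 (m n : ℕ) (hm : 1 < m) (hn : 1 < n) (hmn : Nat.Coprime m n)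
    (t : ℂ) (ht0 : t ≠ 0)
    (b : Fin m → ℤ) (hb : (n : ℤ) ∣ ∑ i, b i)
    (a : ℤ) (ha : ¬ (n : ℤ) ∣ a)
    (C X P W : Matrix (Fin m) (Fin m) ℂ)
    (hC : ∀ i j : Fin m, C i j =
      if (i : ℕ) + 1 = (j : ℕ) then 1
      else if (i : ℕ) = m - 1 ∧ (j : ℕ) = 0 then t else 0)
    (hX : X = C ^ n)
    (hP : P = Matrix.diagonal (fun i => if (n : ℤ) ∣ (b i + a) then 0 else 1))
    (hW : W = (1 - (1 - P) * X⁻¹)⁻¹) :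
    LinearMap.ker ((1 - P) * (1 - X⁻¹)).mulVecLin =
      LinearMap.range (W * P).mulVecLin := by
  haveI : NeZero m := ⟨by omega⟩
  -- C is a weighted cyclic shift
  set o : Fin m := ⟨1, hm⟩ with ho
  have hc : ∀ i : Fin m, (if (i : ℕ) = m - 1 then t else (1:ℂ)) ≠ 0 := by
    intro i; split_ifs
    exacts [ht0, one_ne_zero]
  have hC' : ∀ i j : Fin m, C i j =
      if j = i + o then (if (i : ℕ) = m - 1 then t else (1:ℂ)) else 0 := by
    intro i j
    have hi := i.is_lt
    have hj := j.is_lt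
    have hio : ((i + o : Fin m) : ℕ) = ((i : ℕ) + 1) % m := by
      rw [Fin.val_add]
    rw [hC]
    rcases eq_or_ne (i : ℕ) (m - 1) with h | h
    · have h2 : ((i + o : Fin m) : ℕ) = 0 := by
        rw [hio, show (i : ℕ) + 1 = m by omega, Nat.mod_self]
      rw [if_neg (by omega : ¬ ((i:ℕ) + 1 = (j:ℕ))), if_pos h]
      by_cases h4 : (j : ℕ) = 0
      · rw [if_pos ⟨h, h4⟩, if_pos (Fin.ext (by rw [h2, h4]))]
      · rw [if_neg (fun hh => h4 hh.2), if_neg (fun hh => h4 (by rw [hh, h2]))]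
    · have h2 : ((i + o : Fin m) : ℕ) = (i:ℕ) + 1 := by
        rw [hio, Nat.mod_eq_of_lt (by omega)]
      rw [if_neg h]
      by_cases h4 : (i:ℕ) + 1 = (j:ℕ)
      · rw [if_pos h4, if_pos (Fin.ext (by rw [h2, h4]))]
      · rw [if_neg h4, if_neg (fun hh => h hh.1),
          if_neg (fun hh => h4 (by rw [hh, h2]))]
  obtain ⟨w, hw, hXw'⟩ :=
    wperm_pow C (fun i => if (i : ℕ) = m - 1 then t else (1:ℂ)) hc o hC' n
  have hXw : ∀ i j, X i j = if j = i + n • o then w i else 0 := by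
    rw [hX]; exact hXw'
  have hXv : ∀ (v : Fin m → ℂ) (i), X.mulVec v i = w i * v (i + n • o) := by
    intro v i
    simp [Matrix.mulVec, dotProduct, hXw, ite_mul, zero_mul, Finset.sum_ite_eq']
  -- injectivity helper
  have injOf : ∀ (A : Matrix (Fin m) (Fin m) ℂ),
      (∀ v, A.mulVec v = 0 → v = 0) → Function.Injective A.mulVec := by
    intro A h v v' hvv'
    have := h (v - v') (by rw [Matrix.mulVec_sub, hvv', sub_self])
    exact sub_eq_zero.mp this
  -- X is invertible
  have hXunit : IsUnit X := by
    rw [← Matrix.mulVec_injective_iff_isUnit]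
    apply injOf
    intro v hv
    funext j
    have h1 : w (j - n • o) * v j = 0 := by
      have := congrFun hv (j - n • o)
      rwa [hXv, sub_add_cancel, Pi.zero_apply] at this
    exact (mul_eq_zero.mp h1).resolve_left (hw _)
  have hXdet : IsUnit X.det := (Matrix.isUnit_iff_isUnit_det X).mp hXunit
  have hXinv : X * X⁻¹ = 1 := Matrix.mul_nonsing_inv X hXdet
  have hXinv' : X⁻¹ * X = 1 := Matrix.nonsing_inv_mul X hXdet
  -- P algebra
  have hPP : P * P = P := by
    rw [hP, Matrix.diagonal_mul_diagonal]
    exact congrArg _ (funext fun i => by split_ifs <;> ring)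
  set q : Fin m → ℂ := fun i => if (n:ℤ) ∣ (b i + a) then 1 else 0 with hq
  have hQd : 1 - P = Matrix.diagonal q := by
    rw [hP, ← Matrix.diagonal_one, Matrix.diagonal_sub]
    refine congrArg _ (funext fun i => ?_)
    simp only [hq, Pi.sub_apply]
    split_ifs <;> ring
  -- some index i0 with q i0 = 0
  obtain ⟨i0, hi0⟩ : ∃ i0, ¬ (n:ℤ) ∣ (b i0 + a) := by
    by_contra h
    push_neg at h
    have h1 : (n:ℤ) ∣ ∑ i, (b i + a) := Finset.dvd_sum fun i _ => h i
    rw [Finset.sum_add_distrib, Finset.sum_const, Finset.card_univ, Fintype.card_fin] at h1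
    have h2 : (n:ℤ) ∣ (m:ℤ) * a := by
      have := dvd_sub h1 hb
      simpa [nsmul_eq_mul] using this
    have hcop : IsCoprime (n:ℤ) (m:ℤ) := Nat.isCoprime_iff_coprime.mpr hmn.symm
    exact ha (hcop.dvd_of_dvd_mul_left h2)
  have hqi0 : q i0 = 0 := by simp only [hq]; exact if_neg hi0
  -- values of K • o
  have hsm : ∀ K : ℕ, ((K • o : Fin m) : ℕ) = K % m := by
    intro K
    induction K with
    | zero => simp
    | succ K ih =>
      rw [succ_nsmul, Fin.val_add, ih]
      show (K % m + 1) % m = (K + 1) % m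
      conv_rhs => rw [Nat.add_mod]
      rw [Nat.mod_eq_of_lt hm]
  obtain ⟨n', -, hn'⟩ := Nat.exists_mul_mod_eq_one_of_coprime hmn.symm hm
  have hcover : ∀ j : Fin m, ∃ k : ℕ, i0 + (k + 1) • (n • o) = j := by
    intro j
    have hi0m := i0.is_lt
    set d : ℕ := m + (j : ℕ) - (i0 : ℕ) with hd
    refine ⟨n' * d + m - 1, ?_⟩
    have hk1 : n' * d + m - 1 + 1 = n' * d + m := by omega
    have hmod : Nat.ModEq m ((n' * d + m) * n) d := by
      calc (n' * d + m) * n = (n * n') * d + n * m := by ring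
        _ ≡ (n * n') * d + 0 [MOD m] :=
            Nat.ModEq.add_left _ (Nat.modEq_zero_iff_dvd.mpr ⟨n, mul_comm n m⟩)
        _ = (n * n') * d := by ring
        _ ≡ 1 * d [MOD m] := Nat.ModEq.mul_right _
            (by show n * n' % m = 1 % m; rw [hn', Nat.mod_eq_of_lt hm])
        _ = d := one_mul d
    have goal1 : ((i0:ℕ) + (n' * d + m) * n) % m = (j:ℕ) := by
      have h3 : ((i0:ℕ) + (n' * d + m) * n) % m = ((i0:ℕ) + d) % m :=
        Nat.ModEq.add_left _ hmod
      rw [h3, show (i0:ℕ) + d = m + (j:ℕ) by omega, Nat.add_mod_left,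
        Nat.mod_eq_of_lt j.is_lt]
    apply Fin.ext
    rw [Fin.val_add, ← mul_nsmul, hsm, hk1, Nat.add_mod_mod, mul_comm n (n' * d + m)]
    exact goal1
  -- X - (1 - P) is injective hence invertible
  have hXQ : IsUnit (X - (1 - P)) := by
    rw [← Matrix.mulVec_injective_iff_isUnit]
    apply injOf
    intro v hv
    have hrec : ∀ i, w i * v (i + n • o) = q i * v i := by
      intro i
      have h1 := congrFun hv i
      rw [Matrix.sub_mulVec, hQd] at h1
      have h2 : (X.mulVec v - (Matrix.diagonal q).mulVec v) i = 0 := h1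
      rw [Pi.sub_apply, Matrix.mulVec_diagonal, hXv, sub_eq_zero] at h2
      exact h2
    have step : ∀ i, v i = 0 → v (i + n • o) = 0 := by
      intro i h
      have h' := hrec i
      rw [h, mul_zero] at h'
      exact (mul_eq_zero.mp h').resolve_left (hw i)
    have base : v (i0 + n • o) = 0 := by
      have h' := hrec i0
      rw [hqi0, zero_mul] at h'
      exact (mul_eq_zero.mp h').resolve_left (hw i0)
    have hall : ∀ k : ℕ, v (i0 + (k + 1) • (n • o)) = 0 := by
      intro k
      induction k with
      | zero => simpa using base
      | succ k ih =>
        have h' := step _ ih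
        rw [succ_nsmul ((n:ℕ) • o) (k+1), ← add_assoc]
        exact h'
    funext j
    obtain ⟨k, hk⟩ := hcover j
    rw [← hk]
    exact hall k
  -- M := 1 - (1 - P) * X⁻¹ is invertible
  set M : Matrix (Fin m) (Fin m) ℂ := 1 - (1 - P) * X⁻¹ with hM
  have hMfac : M = (X - (1 - P)) * X⁻¹ := by
    rw [Matrix.sub_mul, hXinv]
  have hMunit : IsUnit M := by
    rw [hMfac]
    exact hXQ.mul (Matrix.isUnit_nonsing_inv_iff.mpr hXunit)
  have hMdet : IsUnit M.det := (Matrix.isUnit_iff_isUnit_det M).mp hMunit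
  have hWM : W * M = 1 := by rw [hW]; exact Matrix.nonsing_inv_mul M hMdet
  have hMW : M * W = 1 := by rw [hW]; exact Matrix.mul_nonsing_inv M hMdet
  have hQQ : (1 - P) * (1 - P) = 1 - P := by
    rw [sub_mul, one_mul, mul_sub, mul_one, hPP]
    noncomm_ring
  have hQP : (1 - P) * P = 0 := by rw [sub_mul, one_mul, hPP, sub_self]
  have hPQ : P * (1 - P) = 0 := by rw [mul_sub, mul_one, hPP, sub_self]
  have hQM : (1 - P) * M = (1 - P) * (1 - X⁻¹) := by
    rw [hM, mul_sub, mul_one, ← mul_assoc, hQQ, mul_sub, mul_one]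
  have hPM : P * M = P := by
    rw [hM, mul_sub, mul_one, ← mul_assoc, hPQ, zero_mul, sub_zero]
  have key1 : ((1 - P) * (1 - X⁻¹)) * (W * P) = 0 := by
    rw [← hQM, mul_assoc, ← mul_assoc M W P, hMW, one_mul, hQP]
  have key2 : M = P + (1 - P) * (1 - X⁻¹) := by
    conv_lhs => rw [show M = (P + (1 - P)) * M by
      rw [show P + (1 - P) = (1 : Matrix (Fin m) (Fin m) ℂ) by abel, one_mul]]
    rw [add_mul, hPM, hQM]
  have hWP : W * P = 1 - W * ((1 - P) * (1 - X⁻¹)) := by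
    have hPMA : P = M - (1 - P) * (1 - X⁻¹) := eq_sub_iff_add_eq.mpr key2.symm
    conv_lhs => rw [hPMA]
    rw [mul_sub, hWM]
  ext x
  simp only [LinearMap.mem_ker, LinearMap.mem_range, Matrix.mulVecLin_apply]
  constructor
  · intro hx
    refine ⟨x, ?_⟩
    rw [hWP, Matrix.sub_mulVec, Matrix.one_mulVec, ← Matrix.mulVec_mulVec, hx,
      Matrix.mulVec_zero, sub_zero]
  · rintro ⟨v, rfl⟩
    rw [Matrix.mulVec_mulVec, key1, Matrix.zero_mulVec]
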